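/- Let μ be a probability measure on a measurable space X, let U ⊆ X be a measurable set with μ(U) > 0, and let g : X → ℝ be a bounded measurable function vanishing outside U. Let μ̄ denote the normalized restriction of μ to U, i.e. μ̄(A) = μ(A ∩ U)/μ(U) for measurable A. Then Var(g; μ) ≤ μ(U)·Var(g; μ̄) + ((1 − μ(U))/μ(U))·‖g‖_∞². -/

import Mathlib

open MeasureTheory

/-- The variance of a real-valued function `G` with respect to a measure `μ`:
`Var(G; μ) = ∫ G² dμ − (∫ G dμ)²`. -/
noncomputable def var {X : Type*} [MeasurableSpace X] (μ : Measure X) (G : X → ℝ) : ℝ :=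
  (∫ x, (G x) ^ 2 ∂μ) - (∫ x, G x ∂μ) ^ 2

/-- For a probability measure `μ`, a measurable set `U` with `μ(U) > 0` and a bounded
measurable `g` vanishing outside `U`, comparing the variance of `g` under `μ` with the
variance under the normalized restriction `μ̄ = μ(·∩U)/μ(U)`:
`Var(g; μ) ≤ μ(U)·Var(g; μ̄) + ((1 − μ(U))/μ(U))·‖g‖_∞²`. -/
theorem variance_normalized_restriction {X : Type*} [MeasurableSpace X] (μ : Measure X)
    [IsProbabilityMeasure μ] (U : Set X) (hU : MeasurableSet U) (hU0 : 0 < μ U)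
    (g : X → ℝ) (hg : Measurable g) (hgbdd : ∃ C : ℝ, ∀ x, |g x| ≤ C)
    (hsupp : ∀ x, x ∉ U → g x = 0) :
    var μ g ≤ (μ U).toReal * var ((μ U)⁻¹ • μ.restrict U) g
      + ((1 - (μ U).toReal) / (μ U).toReal) * (eLpNormEssSup g μ).toReal ^ 2 := by
  unfold var
  obtain ⟨C, hC⟩ := hgbdd
  set m : ℝ := (μ U).toReal with hm
  have hUne : μ U ≠ ⊤ := measure_ne_top μ U
  have hm0 : 0 < m := ENNReal.toReal_pos hU0.ne' hUne
  have hm1 : m ≤ 1 := by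
    rw [hm]; exact ENNReal.toReal_le_of_le_ofReal one_pos.le (by simpa using prob_le_one)
  have hSlt : eLpNormEssSup g μ < ⊤ :=
    eLpNormEssSup_lt_top_of_ae_bound (C := C) (ae_of_all _ fun x => by simpa using hC x)
  set S : ℝ := (eLpNormEssSup g μ).toReal with hS
  -- integrability
  have hint : Integrable g μ :=
    (integrable_const C).mono' hg.aestronglyMeasurable (ae_of_all _ fun x => by simpa using hC x)
  -- bound on |∫ g|
  have hae : ∀ᵐ x ∂μ, ‖g x‖ ≤ S := by
    filter_upwards [ae_le_eLpNormEssSup (f := g) (μ := μ)] with x hx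
    rw [hS]
    exact (ENNReal.toReal_le_toReal ENNReal.coe_ne_top hSlt.ne).2 (by simpa [enorm] using hx)
  have hB : |∫ x, g x ∂μ| ≤ S := by
    calc |∫ x, g x ∂μ| ≤ ∫ x, ‖g x‖ ∂μ := by
          simpa using norm_integral_le_integral_norm g
      _ ≤ ∫ _x, S ∂μ := integral_mono_ae hint.norm (integrable_const S) hae
      _ = S := by simp
  -- restrict integrals equal
  have h1 : ∫ x, g x ∂(μ.restrict U) = ∫ x, g x ∂μ :=
    setIntegral_eq_integral_of_forall_compl_eq_zero fun x hx => hsupp x hx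
  have h2 : ∫ x, (g x)^2 ∂(μ.restrict U) = ∫ x, (g x)^2 ∂μ :=
    setIntegral_eq_integral_of_forall_compl_eq_zero fun x hx => by rw [hsupp x hx]; ring
  have hminv : ((μ U)⁻¹).toReal = m⁻¹ := by
    rw [ENNReal.toReal_inv]
  rw [integral_smul_measure, integral_smul_measure, h1, h2, hminv]
  set a := ∫ x, (g x)^2 ∂μ
  set b := ∫ x, g x ∂μ
  have hb2 : b^2 ≤ S^2 := by nlinarith [abs_nonneg b, sq_abs b]
  have key : m * (m⁻¹ • a - (m⁻¹ • b)^2) = a - b^2 / m := by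
    simp only [smul_eq_mul]; field_simp
  rw [key, ← sub_nonneg]
  have h : a - b ^ 2 / m + (1 - m) / m * S ^ 2 - (a - b ^ 2)
      = ((1 - m) * (S ^ 2 - b ^ 2)) / m := by
    field_simp; ring
  rw [h]
  exact div_nonneg (mul_nonneg (by linarith) (by linarith)) hm0.le
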